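/- Let 𝔤 be a finite-dimensional real Lie algebra with Chevalley–Eilenberg differential d, and suppose 𝔤* = V₁ ⊕ V₂ is a coherent splitting with dim V₁ = r, i.e. d(V₁) ⊆ Λ²V₁ and d(V₂) ⊆ Λ²V₁ + V₁∧V₂. If φ is a generator of Λ^r V₁ (a decomposable r-form spanning Λ^{r,0}), then dφ = 0, dα∧φ = 0 for all 1-forms α ∈ 𝔤*, and the Lie derivative L_X φ is a scalar multiple of φ for every X ∈ 𝔤. -/

import Mathlib

open ExteriorAlgebra


/-- A wedge of more than `finrank V1` vectors of `V1` vanishes. -/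
lemma stmt5aux_zero {M : Type*} [AddCommGroup M] [Module ℝ M] [FiniteDimensional ℝ M]
    (V1 : Submodule ℝ M) (r : ℕ) (hdim : Module.finrank ℝ V1 = r)
    (l : List M) (hlen : r < l.length) (hmem : ∀ m ∈ l, m ∈ V1) :
    (l.map (ι ℝ)).prod = 0 := by
  have hw : ∀ i : Fin l.length, l.get i ∈ V1 := fun i => hmem _ (List.get_mem l i)
  have hnli : ¬ LinearIndependent ℝ (fun i : Fin l.length => l.get i) := by
    intro hli
    set w : Fin l.length → V1 := fun i => ⟨l.get i, hw i⟩ with hwdef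
    have hli' : LinearIndependent ℝ w := by
      apply LinearIndependent.of_comp V1.subtype
      exact hli
    have := hli'.fintype_card_le_finrank
    simp only [Fintype.card_fin, hdim] at this
    omega
  have h0 : ExteriorAlgebra.ιMulti ℝ l.length (fun i => l.get i) = 0 :=
    AlternatingMap.map_linearDependent _ _ hnli
  rw [ExteriorAlgebra.ιMulti_apply] at h0
  rw [← List.ofFn_getElem_eq_map]
  exact h0

/-- A wedge of `r` vectors of `V1` lies in the span of `φ`. -/
lemma stmt5aux_span {M : Type*} [AddCommGroup M] [Module ℝ M]
    (V1 : Submodule ℝ M) (r : ℕ)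
    (v : Fin r → M) (hvli : LinearIndependent ℝ v)
    (hvspan : Submodule.span ℝ (Set.range v) = V1)
    (l : List M) (hlen : l.length = r) (hmem : ∀ m ∈ l, m ∈ V1) :
    (l.map (ι ℝ)).prod ∈
      Submodule.span ℝ {(List.ofFn fun i => ι ℝ (v i)).prod} := by
  subst hlen
  have hw : ∀ i : Fin l.length, l.get i ∈ V1 := fun i => hmem _ (List.get_mem l i)
  set b : Module.Basis (Fin l.length) ℝ V1 :=
    (Module.Basis.span hvli).map (LinearEquiv.ofEq _ _ (by rw [hvspan])) with hb
  have hbcoe : ∀ i, (b i : M) = v i := by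
    intro i
    simp [hb, Module.Basis.span_apply]
  set F : AlternatingMap ℝ V1 (ExteriorAlgebra ℝ M) (Fin l.length) :=
    (ExteriorAlgebra.ιMulti ℝ l.length).compLinearMap V1.subtype with hF
  set G : AlternatingMap ℝ V1 (ExteriorAlgebra ℝ M) (Fin l.length) :=
    (LinearMap.toSpanSingleton ℝ _
      (ExteriorAlgebra.ιMulti ℝ l.length v)).compAlternatingMap b.det with hG
  have hFb : F b = G b := by
    have h1 : F b = ExteriorAlgebra.ιMulti ℝ l.length v := by
      simp only [hF, AlternatingMap.compLinearMap_apply]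
      congr 1
      funext i
      exact hbcoe i
    have h2 : G b = ExteriorAlgebra.ιMulti ℝ l.length v := by
      simp [hG, Module.Basis.det_self, LinearMap.toSpanSingleton_apply]
    rw [h1, h2]
  have hFG : F = G := by
    apply b.ext_alternating
    intro u hu
    have hbij : Function.Bijective u := (Finite.injective_iff_bijective).1 hu
    set σ : Equiv.Perm (Fin l.length) := Equiv.ofBijective u hbij with hσ
    have hbu : (fun i => b (u i)) = (⇑b ∘ σ) := rfl
    rw [hbu, F.map_perm, G.map_perm, hFb]
  -- now conclude
  have hmemspan : F (fun i => ⟨l.get i, hw i⟩) ∈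
      Submodule.span ℝ {(List.ofFn fun i => ι ℝ (v i)).prod} := by
    rw [hFG]
    simp only [hG, LinearMap.compAlternatingMap_apply, LinearMap.toSpanSingleton_apply,
      ExteriorAlgebra.ιMulti_apply]
    exact Submodule.smul_mem _ _ (Submodule.mem_span_singleton_self _)
  have : F (fun i => ⟨l.get i, hw i⟩) = (l.map (ι ℝ)).prod := by
    simp only [hF, AlternatingMap.compLinearMap_apply, ExteriorAlgebra.ιMulti_apply,
      Submodule.coe_subtype]
    rw [← List.ofFn_getElem_eq_map]; rfl
  rwa [this] at hmemspan

/-- let `𝔤` be a finite-dimensional real Lie algebra, encoded by its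
Chevalley–Eilenberg differential `d` on `Λ*𝔤*` (an antiderivation with `d² = 0`), and let
`𝔤* = V₁ ⊕ V₂` be a coherent splitting with `dim V₁ = r`, i.e. `d(V₁) ⊆ Λ²V₁` and
`d(V₂) ⊆ Λ²V₁ + V₁∧V₂ = V₁∧Λ¹`. If `φ = ι(v₁)∧⋯∧ι(v_r)` is a generator of `Λ^r V₁`,
then `dφ = 0`, `dα∧φ = 0` for every 1-form `α`, and for every `X ∈ 𝔤 = (𝔤*)*` the Lie
derivative `L_X φ = d(X⌟φ) + X⌟(dφ)` is a scalar multiple of `φ`. -/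
theorem stmt5 {M : Type*} [AddCommGroup M] [Module ℝ M] [FiniteDimensional ℝ M]
    (d : ExteriorAlgebra ℝ M →ₗ[ℝ] ExteriorAlgebra ℝ M)
    (hone : d 1 = 0)
    (hleib : ∀ (m : M) (x : ExteriorAlgebra ℝ M),
      d (ι ℝ m * x) = d (ι ℝ m) * x - ι ℝ m * d x)
    (hdd : ∀ x, d (d x) = 0)
    (V1 V2 : Submodule ℝ M) (hcompl : IsCompl V1 V2)
    (r : ℕ) (hr : 2 ≤ r) (hdim : Module.finrank ℝ V1 = r)
    (hc1 : ∀ m ∈ V1, d (ι ℝ m) ∈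
      Submodule.span ℝ {y : ExteriorAlgebra ℝ M | ∃ a ∈ V1, ∃ b ∈ V1, y = ι ℝ a * ι ℝ b})
    (hc2 : ∀ m ∈ V2, d (ι ℝ m) ∈
      Submodule.span ℝ {y : ExteriorAlgebra ℝ M | ∃ a ∈ V1, ∃ b : M, y = ι ℝ a * ι ℝ b})
    (v : Fin r → M) (hvli : LinearIndependent ℝ v)
    (hvspan : Submodule.span ℝ (Set.range v) = V1)
    (φ : ExteriorAlgebra ℝ M) (hφ : φ = (List.ofFn fun i => ι ℝ (v i)).prod) :
    d φ = 0 ∧ (∀ a : M, d (ι ℝ a) * φ = 0) ∧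
    ∀ X : Module.Dual ℝ M, ∃ c : ℝ,
      d (CliffordAlgebra.contractLeft X φ) + CliffordAlgebra.contractLeft X (d φ)
        = c • φ := by
  classical
  -- the submodule of sums of wedges of `k` vectors of `V1`
  set Nk : ℕ → Submodule ℝ (ExteriorAlgebra ℝ M) := fun k =>
    Submodule.span ℝ {x | ∃ l : List M, l.length = k ∧ (∀ m ∈ l, m ∈ V1) ∧
      x = (l.map (ι ℝ)).prod} with hNk
  have hgen : ∀ (l : List M), (∀ m ∈ l, m ∈ V1) → (l.map (ι ℝ)).prod ∈ Nk l.length :=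
    fun l hm => Submodule.subset_span ⟨l, rfl, hm, rfl⟩
  -- multiplication by ι of a V1 vector raises degree
  have hmul : ∀ m ∈ V1, ∀ (k : ℕ) (x), x ∈ Nk k → ι ℝ m * x ∈ Nk (k + 1) := by
    intro m hm k x hx
    induction hx using Submodule.span_induction with
    | mem y hy =>
      obtain ⟨l, hl, hlm, rfl⟩ := hy
      have : ι ℝ m * (l.map (ι ℝ)).prod = ((m :: l).map (ι ℝ)).prod := by
        simp [List.prod_cons]
      rw [this]
      exact Submodule.subset_span ⟨m :: l, by simp [hl], by
        intro x hx
        rcases List.mem_cons.1 hx with h | h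
        · exact h ▸ hm
        · exact hlm x h, rfl⟩
    | zero => simp
    | add x y hx hy ihx ihy => rw [mul_add]; exact Submodule.add_mem _ ihx ihy
    | smul a x hx ihx => rw [mul_smul_comm]; exact Submodule.smul_mem _ _ ihx
  -- multiplication by elements of span {ι a * ι b : a b ∈ V1} raises degree by 2
  have hmul2 : ∀ x ∈ Submodule.span ℝ
      {y : ExteriorAlgebra ℝ M | ∃ a ∈ V1, ∃ b ∈ V1, y = ι ℝ a * ι ℝ b},
      ∀ (k : ℕ) (y), y ∈ Nk k → x * y ∈ Nk (k + 2) := by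
    intro x hx k y hy
    induction hx using Submodule.span_induction with
    | mem z hz =>
      obtain ⟨a, ha, b, hb, rfl⟩ := hz
      rw [mul_assoc]
      exact hmul a ha (k + 1) _ (hmul b hb k y hy)
    | zero => simp
    | add x₁ x₂ h₁ h₂ ih₁ ih₂ => rw [add_mul]; exact Submodule.add_mem _ ih₁ ih₂
    | smul a x₁ h₁ ih₁ => rw [smul_mul_assoc]; exact Submodule.smul_mem _ _ ih₁
  -- `d` of a wedge of `k` vectors of `V1` is in `Nk (k+1)`
  have hd : ∀ l : List M, (∀ m ∈ l, m ∈ V1) → d ((l.map (ι ℝ)).prod) ∈ Nk (l.length + 1) := by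
    intro l
    induction l with
    | nil =>
      intro _
      rw [List.map_nil, List.prod_nil, hone]
      exact Submodule.zero_mem _
    | cons m t ih =>
      intro hm
      have hmV : m ∈ V1 := hm m List.mem_cons_self
      have htV : ∀ x ∈ t, x ∈ V1 := fun x hx => hm x (List.mem_cons_of_mem _ hx)
      rw [List.map_cons, List.prod_cons, hleib]
      refine Submodule.sub_mem _ ?_ ?_
      · exact hmul2 _ (hc1 m hmV) t.length _ (hgen t htV)
      · exact hmul m hmV (t.length + 1) _ (ih htV)
  have hdNk : ∀ (k : ℕ) (x), x ∈ Nk k → d x ∈ Nk (k + 1) := by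
    intro k x hx
    induction hx using Submodule.span_induction with
    | mem y hy =>
      obtain ⟨l, hl, hlm, rfl⟩ := hy
      exact hl ▸ hd l hlm
    | zero => simp
    | add x y hx hy ihx ihy => rw [map_add]; exact Submodule.add_mem _ ihx ihy
    | smul a x hx ihx => rw [map_smul]; exact Submodule.smul_mem _ _ ihx
  -- contraction lowers degree
  have hcont : ∀ (X : Module.Dual ℝ M) (l : List M), (∀ m ∈ l, m ∈ V1) →
      CliffordAlgebra.contractLeft X ((l.map (ι ℝ)).prod) ∈ Nk (l.length - 1) := by
    intro X l
    induction l with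
    | nil =>
      intro _
      simpa using Submodule.zero_mem _
    | cons m t ih =>
      intro hm
      have hmV : m ∈ V1 := hm m List.mem_cons_self
      have htV : ∀ x ∈ t, x ∈ V1 := fun x hx => hm x (List.mem_cons_of_mem _ hx)
      rw [List.map_cons, List.prod_cons, CliffordAlgebra.contractLeft_ι_mul]
      have h1 : X m • (t.map (ι ℝ)).prod ∈ Nk t.length :=
        Submodule.smul_mem _ _ (hgen t htV)
      have h2 : ι ℝ m * CliffordAlgebra.contractLeft X ((t.map (ι ℝ)).prod) ∈ Nk t.length := by
        cases t with
        | nil =>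
          simp [CliffordAlgebra.contractLeft_one]
        | cons m' t' =>
          have := ih htV
          simpa using hmul m hmV t'.length _ (by simpa using this)
      simpa using Submodule.sub_mem _ h1 h2
  -- key vanishing and span facts
  have hNtop : ∀ x ∈ Nk (r + 1), x = 0 := by
    intro x hx
    have : Nk (r + 1) = ⊥ := by
      rw [hNk]
      rw [Submodule.span_eq_bot]
      rintro y ⟨l, hl, hlm, rfl⟩
      exact stmt5aux_zero V1 r hdim l (by omega) hlm
    rw [this] at hx
    simpa using hx
  have hNr : Nk r ≤ Submodule.span ℝ {φ} := by
    rw [hNk, Submodule.span_le]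
    rintro y ⟨l, hl, hlm, rfl⟩
    rw [hφ]
    exact stmt5aux_span V1 r v hvli hvspan l hl hlm
  -- φ as a product over a list
  set L : List M := List.ofFn v with hL
  have hLlen : L.length = r := by simp [hL]
  have hLm : ∀ m ∈ L, m ∈ V1 := by
    intro m hm
    rw [hL, List.mem_ofFn] at hm
    obtain ⟨i, rfl⟩ := hm
    rw [← hvspan]
    exact Submodule.subset_span (Set.mem_range_self i)
  have hφL : φ = (L.map (ι ℝ)).prod := by
    rw [hφ, hL, List.map_ofFn]
    rfl
  have hdφ : d φ = 0 := by
    rw [hφL]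
    exact hNtop _ (by simpa [hLlen] using hd L hLm)
  refine ⟨hdφ, ?_, ?_⟩
  · -- dα ∧ φ = 0
    intro a
    have ha : a ∈ V1 ⊔ V2 := by rw [hcompl.sup_eq_top]; trivial
    obtain ⟨a1, ha1, a2, ha2, rfl⟩ := Submodule.mem_sup.1 ha
    have hsub : {y : ExteriorAlgebra ℝ M | ∃ a ∈ V1, ∃ b ∈ V1, y = ι ℝ a * ι ℝ b} ⊆
        {y : ExteriorAlgebra ℝ M | ∃ a ∈ V1, ∃ b : M, y = ι ℝ a * ι ℝ b} := by
      rintro y ⟨a, ha, b, _, rfl⟩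
      exact ⟨a, ha, b, rfl⟩
    have hda : d (ι ℝ (a1 + a2)) ∈ Submodule.span ℝ
        {y : ExteriorAlgebra ℝ M | ∃ a ∈ V1, ∃ b : M, y = ι ℝ a * ι ℝ b} := by
      rw [map_add, map_add]
      exact Submodule.add_mem _ (Submodule.span_mono hsub (hc1 a1 ha1)) (hc2 a2 ha2)
    -- every element of that span kills φ
    have key : ∀ x ∈ Submodule.span ℝ
        {y : ExteriorAlgebra ℝ M | ∃ a ∈ V1, ∃ b : M, y = ι ℝ a * ι ℝ b}, x * φ = 0 := by
      intro x hx
      induction hx using Submodule.span_induction with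
      | mem y hy =>
        obtain ⟨c, hc, b, rfl⟩ := hy
        have hcφ : ι ℝ c * φ = 0 := by
          rw [hφL]
          have : ι ℝ c * (L.map (ι ℝ)).prod = ((c :: L).map (ι ℝ)).prod := by
            simp [List.prod_cons]
          rw [this]
          refine stmt5aux_zero V1 r hdim (c :: L) (by simp [hLlen]) ?_
          intro x hx
          rcases List.mem_cons.1 hx with h | h
          · exact h ▸ hc
          · exact hLm x h
        have hswap : ι ℝ c * ι ℝ b = -(ι ℝ b * ι ℝ c) :=
          eq_neg_of_add_eq_zero_left (ExteriorAlgebra.ι_add_mul_swap c b)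
        rw [hswap, neg_mul, mul_assoc, hcφ, mul_zero, neg_zero]
      | zero => simp
      | add x y hx hy ihx ihy => rw [add_mul, ihx, ihy, add_zero]
      | smul s x hx ihx => rw [smul_mul_assoc, ihx, smul_zero]
    exact key _ hda
  · -- Lie derivative
    intro X
    have h1 : CliffordAlgebra.contractLeft X φ ∈ Nk (r - 1) := by
      rw [hφL]
      simpa [hLlen] using hcont X L hLm
    have h2 : d (CliffordAlgebra.contractLeft X φ) ∈ Nk r := by
      have := hdNk (r - 1) _ h1
      have hreq : r - 1 + 1 = r := by omega
      rwa [hreq] at this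
    have h3 : d (CliffordAlgebra.contractLeft X φ) ∈ Submodule.span ℝ {φ} := hNr h2
    obtain ⟨c, hc⟩ := Submodule.mem_span_singleton.1 h3
    exact ⟨c, by rw [hdφ, map_zero, add_zero, ← hc]⟩
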